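/- DPLL is correct: the recursive DPLL procedure (branch on a variable, simplify, recurse on both truth values, report satisfiable iff some branch reaches the empty clause set, unsatisfiable iff every branch derives an empty clause) returns true on a CNF formula F if and only if F is satisfiable. -/

import Mathlib

/-- A literal: a variable index together with a polarity. -/
abbrev Lit (n : ℕ) := Fin n × Bool

/-- A clause: a finite disjunction of literals. -/
abbrev Clause (n : ℕ) := List (Lit n)

/-- A CNF formula: a finite conjunction (list) of clauses. -/
abbrev CNF (n : ℕ) := List (Clause n)

/-- An assignment satisfies a literal. -/
def litSat {n : ℕ} (a : Fin n → Bool) (l : Lit n) : Prop := a l.1 = l.2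

/-- An assignment satisfies a clause if it satisfies some literal of it. -/
def clauseSat {n : ℕ} (a : Fin n → Bool) (c : Clause n) : Prop :=
  ∃ l ∈ c, litSat a l

/-- An assignment satisfies a CNF formula if it satisfies every clause. -/
def cnfSat {n : ℕ} (a : Fin n → Bool) (F : CNF n) : Prop :=
  ∀ c ∈ F, clauseSat a c

/-- A CNF formula is satisfiable if some assignment satisfies it. -/
def Satisfiable {n : ℕ} (F : CNF n) : Prop := ∃ a, cnfSat a F

/-- Simplification of a CNF formula by the assignment `x := b`: remove every
clause containing the literal `(x, b)` (it is satisfied), and delete the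
falsified literal `(x, !b)` from all remaining clauses. -/
def assignSimp {n : ℕ} (F : CNF n) (x : Fin n) (b : Bool) : CNF n :=
  (F.filter (fun c => !c.contains ((x, b) : Lit n))).map
    (fun c => c.filter (fun l => l != ((x, !b) : Lit n)))

/-- The recursive DPLL procedure, with a fuel parameter bounding the recursion
depth (the number of unassigned variables): return `true` if the formula has
no clauses; return `false` if it contains the empty clause; otherwise pick a
variable `x` appearing in the formula and return
`DPLL (F[x := true]) ∨ DPLL (F[x := false])`. -/
def dpll {n : ℕ} : ℕ → CNF n → Bool
  | 0, F => F.isEmpty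
  | fuel + 1, F =>
    if F.isEmpty then true
    else if F.contains ([] : Clause n) then false
    else
      match (F.flatMap id).head? with
      | none => false
      | some l =>
          dpll fuel (assignSimp F l.1 true) || dpll fuel (assignSimp F l.1 false)

lemma contains_iff' {α} [BEq α] [LawfulBEq α] (l : List α) (a : α) :
    l.contains a = true ↔ a ∈ l := List.elem_iff

/-- The set of variables appearing in a CNF formula. -/
def cnfVars {n : ℕ} (F : CNF n) : Finset (Fin n) :=
  ((F.flatMap id).map Prod.fst).toFinset

lemma mem_cnfVars {n : ℕ} {F : CNF n} {x : Fin n} :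
    x ∈ cnfVars F ↔ ∃ c ∈ F, ∃ b, (x, b) ∈ c := by
  simp only [cnfVars, List.mem_toFinset, List.mem_map, List.mem_flatMap, id]
  constructor
  · rintro ⟨l, ⟨c, hc, hl⟩, rfl⟩
    exact ⟨c, hc, l.2, hl⟩
  · rintro ⟨c, hc, b, hb⟩
    exact ⟨(x, b), ⟨c, hc, hb⟩, rfl⟩

/-- No occurrence of `x` in `assignSimp F x b`. -/
lemma assignSimp_not_mem_vars {n : ℕ} (F : CNF n) (x : Fin n) (b : Bool) :
    x ∉ cnfVars (assignSimp F x b) := by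
  rw [mem_cnfVars]
  rintro ⟨c, hc, b', hb'⟩
  simp only [assignSimp, List.mem_map, List.mem_filter] at hc
  obtain ⟨c0, ⟨hc0, hcont⟩, rfl⟩ := hc
  rw [List.mem_filter] at hb'
  obtain ⟨hmem, hne⟩ := hb'
  simp only [bne_iff_ne, ne_eq, Prod.mk.injEq] at hne
  have hb'b : b' = b := by
    cases b <;> cases b' <;> simp_all
  subst hb'b
  rw [Bool.not_eq_true', ← Bool.not_eq_true, contains_iff'] at hcont
  exact hcont hmem

lemma cnfVars_assignSimp_subset {n : ℕ} (F : CNF n) (x : Fin n) (b : Bool) :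
    cnfVars (assignSimp F x b) ⊆ (cnfVars F).erase x := by
  intro y hy
  rw [Finset.mem_erase]
  refine ⟨fun h => assignSimp_not_mem_vars F x b (h ▸ hy), ?_⟩
  rw [mem_cnfVars] at hy ⊢
  obtain ⟨c, hc, b', hb'⟩ := hy
  simp only [assignSimp, List.mem_map, List.mem_filter] at hc
  obtain ⟨c0, ⟨hc0, _⟩, rfl⟩ := hc
  rw [List.mem_filter] at hb'
  exact ⟨c0, hc0, b', hb'.1⟩

/-- If `a x = b` then `a` satisfies `assignSimp F x b` iff it satisfies `F`. -/
lemma cnfSat_assignSimp {n : ℕ} {a : Fin n → Bool} {F : CNF n} {x : Fin n} {b : Bool}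
    (hax : a x = b) : cnfSat a (assignSimp F x b) ↔ cnfSat a F := by
  constructor
  · intro h c hc
    by_cases hcont : ((x, b) : Lit n) ∈ c
    · exact ⟨(x, b), hcont, hax⟩
    · have hc' : c.filter (fun l => l != ((x, !b) : Lit n)) ∈ assignSimp F x b := by
        simp only [assignSimp, List.mem_map, List.mem_filter]
        refine ⟨c, ⟨hc, ?_⟩, rfl⟩
        rw [Bool.not_eq_true']
        exact Bool.not_eq_true _ ▸ fun h => hcont ((contains_iff' _ _).mp h)
      obtain ⟨l, hl, hsat⟩ := h _ hc'
      rw [List.mem_filter] at hl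
      exact ⟨l, hl.1, hsat⟩
  · intro h c hc
    simp only [assignSimp, List.mem_map, List.mem_filter] at hc
    obtain ⟨c0, ⟨hc0, hcont⟩, rfl⟩ := hc
    obtain ⟨l, hl, hsat⟩ := h c0 hc0
    refine ⟨l, ?_, hsat⟩
    rw [List.mem_filter]
    refine ⟨hl, ?_⟩
    simp only [bne_iff_ne, ne_eq]
    rintro rfl
    simp only [litSat] at hsat
    rw [hax] at hsat
    exact (Bool.not_ne_self b).symm hsat

/-- Updating a variable not occurring in `F` preserves satisfaction. -/
lemma cnfSat_update {n : ℕ} {a : Fin n → Bool} {F : CNF n} {x : Fin n} (b : Bool)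
    (hx : x ∉ cnfVars F) (h : cnfSat a F) : cnfSat (Function.update a x b) F := by
  intro c hc
  obtain ⟨l, hl, hsat⟩ := h c hc
  refine ⟨l, hl, ?_⟩
  have hlx : l.1 ≠ x := by
    rintro hlx
    exact hx (mem_cnfVars.mpr ⟨c, hc, l.2, by rw [← hlx]; exact hl⟩)
  simpa [litSat, Function.update_of_ne hlx] using hsat

lemma satisfiable_branch {n : ℕ} (F : CNF n) (x : Fin n) :
    Satisfiable F ↔ Satisfiable (assignSimp F x true) ∨ Satisfiable (assignSimp F x false) := by
  constructor
  · rintro ⟨a, ha⟩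
    cases hax : a x
    · exact Or.inr ⟨a, (cnfSat_assignSimp hax).mpr ha⟩
    · exact Or.inl ⟨a, (cnfSat_assignSimp hax).mpr ha⟩
  · rintro (⟨a, ha⟩ | ⟨a, ha⟩)
    · refine ⟨Function.update a x true, (cnfSat_assignSimp (Function.update_self x true a)).mp ?_⟩
      exact cnfSat_update true (assignSimp_not_mem_vars F x true) ha
    · refine ⟨Function.update a x false, (cnfSat_assignSimp (Function.update_self x false a)).mp ?_⟩
      exact cnfSat_update false (assignSimp_not_mem_vars F x false) ha

lemma dpll_correct_fuel {n : ℕ} (fuel : ℕ) (F : CNF n)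
    (hcard : (cnfVars F).card ≤ fuel) : dpll fuel F = true ↔ Satisfiable F := by
  induction fuel generalizing F with
  | zero =>
    simp only [dpll, List.isEmpty_iff]
    constructor
    · rintro rfl
      exact ⟨fun _ => false, fun c hc => by simp at hc⟩
    · rintro ⟨a, ha⟩
      rcases F with _ | ⟨c, F'⟩
      · rfl
      · exfalso
        have hcempty : c = [] := by
          rcases c with _ | ⟨l, c'⟩
          · rfl
          · exfalso
            have : l.1 ∈ cnfVars ((l :: c') :: F' : CNF n) :=
              mem_cnfVars.mpr ⟨l :: c', by simp, l.2, by simp⟩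
            have := Finset.card_pos.mpr ⟨l.1, this⟩
            omega
        obtain ⟨l, hl, _⟩ := ha c (by simp)
        rw [hcempty] at hl; simp at hl
  | succ fuel ih =>
    by_cases hemp : F.isEmpty = true
    · rw [dpll, if_pos hemp]
      rw [List.isEmpty_iff] at hemp
      subst hemp
      exact ⟨fun _ => ⟨fun _ => false, fun c hc => by simp at hc⟩, fun _ => rfl⟩
    · by_cases hcon : F.contains ([] : Clause n) = true
      · rw [dpll, if_neg hemp, if_pos hcon]
        constructor
        · intro h; exact absurd h (by simp)
        · rintro ⟨a, ha⟩
          exfalso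
          rw [contains_iff'] at hcon
          obtain ⟨l, hl, _⟩ := ha [] hcon
          simp at hl
      · rcases hh : (F.flatMap id).head? with _ | l
        · exfalso
          rw [List.head?_eq_none_iff] at hh
          rcases F with _ | ⟨c, F'⟩
          · exact hemp rfl
          · have hc : c = [] := by
              rcases c with _ | ⟨l, c'⟩
              · rfl
              · exfalso
                have : l ∈ ((l :: c' : Clause n) :: F').flatMap id := by simp
                rw [hh] at this; simp at this
            rw [contains_iff'] at hcon
            exact hcon (hc ▸ List.mem_cons_self)
        · have hred : dpll (fuel+1) F
              = (dpll fuel (assignSimp F l.1 true) || dpll fuel (assignSimp F l.1 false)) := by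
            rw [dpll, if_neg hemp, if_neg hcon, hh]
          have hlmem : l ∈ F.flatMap id := List.mem_of_mem_head? (by rw [hh]; simp)
          have hxvar : l.1 ∈ cnfVars F := by
            rw [mem_cnfVars]
            simp only [List.mem_flatMap, id] at hlmem
            obtain ⟨c, hc, hl⟩ := hlmem
            exact ⟨c, hc, l.2, hl⟩
          have hsub : ∀ b, (cnfVars (assignSimp F l.1 b)).card ≤ fuel := by
            intro b
            have h1 := Finset.card_le_card (cnfVars_assignSimp_subset F l.1 b)
            have h2 := Finset.card_erase_of_mem hxvar
            omega
          rw [hred, Bool.or_eq_true, ih _ (hsub true), ih _ (hsub false),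
            ← satisfiable_branch]

/-- DPLL is correct: the recursive DPLL procedure (with fuel
`n`, the number of variables, which bounds the recursion depth) returns `true`
on a CNF formula `F` over `n` variables iff `F` is satisfiable. -/
theorem dpll_correct {n : ℕ} (F : CNF n) :
    dpll n F = true ↔ Satisfiable F := by
  refine dpll_correct_fuel n F ?_
  calc (cnfVars F).card ≤ (Finset.univ : Finset (Fin n)).card :=
        Finset.card_le_card (Finset.subset_univ _)
    _ = n := by simp
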